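/- For every finite word u in the language of a simple Toeplitz subshift with |u| ≤ |p^(k)| + 1, there exists a letter a ∈ A_{k+1} := {a_j : j ≥ k+1} such that u is a subword of the word p^(k) a p^(k). -/

import Mathlib

def pBlock {A : Type*} (a : ℕ → A) (n : ℕ → ℕ) : ℕ → List A
  | 0 => []
  | k + 1 => (List.replicate (n k - 1) (pBlock a n k ++ [a k])).flatten ++ pBlock a n k

/-- The one-sided infinite limit word `p^(∞)` of the nested blocks `p^(k)`. -/
def pInf {A : Type*} (a : ℕ → A) (n : ℕ → ℕ) : ℕ → A :=
  fun i => (pBlock a n (i + 2)).getD i (a 0)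

def occursIn1 {A : Type*} (u : List A) (ρ : ℕ → A) : Prop :=
  ∃ j : ℕ, ∀ i : Fin u.length, u.get i = ρ (j + (i : ℕ))

section Aux

variable {A : Type*} (a : ℕ → A) (n : ℕ → ℕ)

lemma join_cons' {A : Type*} (x : List A) (L : List (List A)) :
    (x :: L).flatten = x ++ L.flatten := rfl

lemma pBlock_succ_def (m : ℕ) :
    pBlock a n (m + 1) =
      (List.replicate (n m - 1) (pBlock a n m ++ [a m])).flatten ++ pBlock a n m := rfl

lemma pBlock_prefix_succ (hn : ∀ k, 2 ≤ n k) (m : ℕ) :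
    pBlock a n m <+: pBlock a n (m + 1) := by
  have h : n m - 1 = (n m - 2) + 1 := by have := hn m; omega
  rw [pBlock_succ_def, h, List.replicate_succ, join_cons']
  exact ⟨[a m] ++ ((List.replicate (n m - 2) (pBlock a n m ++ [a m])).flatten ++ pBlock a n m),
    by simp⟩

lemma pBlock_prefix (hn : ∀ k, 2 ≤ n k) {m₁ m₂ : ℕ} (h : m₁ ≤ m₂) :
    pBlock a n m₁ <+: pBlock a n m₂ := by
  induction m₂, h using Nat.le_induction with
  | base => exact List.prefix_refl _
  | succ m hm ih => exact ih.trans (pBlock_prefix_succ a n hn m)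

lemma length_pBlock_succ (m : ℕ) :
    (pBlock a n (m + 1)).length = (n m - 1) * ((pBlock a n m).length + 1)
      + (pBlock a n m).length := by
  rw [pBlock_succ_def]
  simp [List.length_flatten, List.map_replicate, List.sum_replicate, Nat.smul_one_eq_cast]

lemma le_length_pBlock (hn : ∀ k, 2 ≤ n k) (m : ℕ) : m ≤ (pBlock a n m).length + 1 := by
  induction m with
  | zero => omega
  | succ m ih =>
    have h := length_pBlock_succ a n m
    have h1 : 1 ≤ n m - 1 := by have := hn m; omega
    have h2 : (pBlock a n m).length + 1 ≤ (n m - 1) * ((pBlock a n m).length + 1) :=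
      Nat.le_mul_of_pos_left _ (by omega)
    omega

lemma pInf_eq (hn : ∀ k, 2 ≤ n k) {i m : ℕ} (h : i < (pBlock a n m).length) :
    pInf a n i = (pBlock a n m)[i] := by
  have hi2 : i < (pBlock a n (i + 2)).length := by
    have := le_length_pBlock a n hn (i + 2); omega
  show (pBlock a n (i + 2)).getD i (a 0) = _
  rw [List.getD_eq_getElem _ _ hi2]
  rcases le_total (i + 2) m with hle | hle
  · exact (pBlock_prefix a n hn hle).getElem hi2
  · exact ((pBlock_prefix a n hn hle).getElem h).symm

/-- `u` occurs as the window of `l` starting at position `j`. -/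
def Window (u : List A) (j : ℕ) (l : List A) : Prop :=
  j + u.length ≤ l.length ∧
    ∀ (i : ℕ) (hi : i < u.length) (hj : j + i < l.length), u[i] = l[j + i]

lemma Window.infix {u : List A} {j : ℕ} {l : List A} (h : Window u j l) : u <:+: l := by
  obtain ⟨h1, h2⟩ := h
  have he : u = (l.drop j).take u.length := by
    apply List.ext_getElem
    · simp; omega
    · intro i hi hi'
      rw [List.getElem_take, List.getElem_drop]
      exact h2 i hi (by omega)
  rw [he]
  exact ((List.take_prefix _ _).isInfix).trans (List.drop_suffix j l).isInfix

lemma Window.of_prefix {u : List A} {j : ℕ} {l l' : List A} (h : Window u j l')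
    (hp : l <+: l') (hlen : j + u.length ≤ l.length) : Window u j l := by
  refine ⟨hlen, fun i hi hj => ?_⟩
  rw [hp.getElem hj]
  exact h.2 i hi (by have := hp.length_le; have := h.1; omega)

lemma Window.mono {u : List A} {j : ℕ} {l l' : List A} (h : Window u j l)
    (hp : l <+: l') : Window u j l' := by
  have h1 := h.1
  refine ⟨by have := hp.length_le; omega, fun i hi hj => ?_⟩
  rw [← hp.getElem (by omega)]
  exact h.2 i hi (by omega)

lemma Window.shift {u : List A} {j : ℕ} {x y : List A} (h : Window u j (x ++ y))
    (hx : x.length ≤ j) : Window u (j - x.length) y := by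
  obtain ⟨h1, h2⟩ := h
  simp only [List.length_append] at h1
  refine ⟨by omega, fun i hi hj => ?_⟩
  have hji : j + i < (x ++ y).length := by simp; omega
  have := h2 i hi hji
  rw [List.getElem_append_right (by omega)] at this
  convert this using 2
  omega

/-- Concatenation `P ⋆ P ⋆ ⋯ ⋆ P` with stars given by the list `bs`. -/
def blockConcat (P : List A) (bs : List A) : List A :=
  P ++ (bs.map (fun b => b :: P)).flatten

lemma blockConcat_nil (P : List A) : blockConcat P [] = P := by
  simp [blockConcat]

lemma blockConcat_cons (P : List A) (b : A) (bs : List A) :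
    blockConcat P (b :: bs) = (P ++ [b]) ++ blockConcat P bs := by
  simp [blockConcat]

lemma blockConcat_glue (P : List A) (bs₁ bs₂ : List A) (c : A) :
    blockConcat P bs₁ ++ [c] ++ blockConcat P bs₂ = blockConcat P (bs₁ ++ c :: bs₂) := by
  simp [blockConcat]

lemma pBlock_good (hn : ∀ k, 2 ≤ n k) (k : ℕ) {m : ℕ} (hm : k + 1 ≤ m) :
    ∃ bs : List A, (∀ b ∈ bs, ∃ j, k + 1 ≤ j ∧ a j = b) ∧
      pBlock a n m = blockConcat (pBlock a n (k + 1)) bs := by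
  induction m, hm using Nat.le_induction with
  | base => exact ⟨[], by simp, (blockConcat_nil _).symm⟩
  | succ m hm ih =>
    obtain ⟨bs, hbs, heq⟩ := ih
    have key : ∀ t : ℕ, ∃ cs : List A, (∀ b ∈ cs, ∃ j, k + 1 ≤ j ∧ a j = b) ∧
        (List.replicate t (pBlock a n m ++ [a m])).flatten ++ pBlock a n m
          = blockConcat (pBlock a n (k + 1)) cs := by
      intro t
      induction t with
      | zero => exact ⟨bs, hbs, by simpa using heq⟩
      | succ t iht =>
        obtain ⟨cs, hcs, hceq⟩ := iht
        refine ⟨bs ++ a m :: cs, ?_, ?_⟩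
        · intro b hb
          rcases List.mem_append.1 hb with hb | hb
          · exact hbs b hb
          · rcases List.mem_cons.1 hb with hb | hb
            · exact ⟨m, hm, hb.symm⟩
            · exact hcs b hb
        · rw [List.replicate_succ, join_cons', ← blockConcat_glue]
          rw [← heq, ← hceq]
          simp
    obtain ⟨cs, hcs, hceq⟩ := key (n m - 1)
    exact ⟨cs, hcs, by rw [pBlock_succ_def]; exact hceq⟩

lemma main_aux (k : ℕ) (P : List A) :
    ∀ (bs : List A), (∀ b ∈ bs, ∃ j, k + 1 ≤ j ∧ a j = b) →
      ∀ (j : ℕ) (u : List A), u.length ≤ P.length + 1 → Window u j (blockConcat P bs) →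
        ∃ b : A, (∃ j, k + 1 ≤ j ∧ a j = b) ∧ u <:+: (P ++ [b] ++ P) := by
  intro bs
  induction bs with
  | nil =>
    intro _ j u _ hw
    rw [blockConcat_nil] at hw
    refine ⟨a (k + 1), ⟨k + 1, le_refl _, rfl⟩, ?_⟩
    exact (hw.mono ⟨[a (k + 1)] ++ P, by simp⟩).infix
  | cons b bs ih =>
    intro hgood j u hlen hw
    rw [blockConcat_cons] at hw
    by_cases hj : P.length + 1 ≤ j
    · have := hw.shift (x := P ++ [b]) (by simpa using hj)
      simp only [List.length_append, List.length_singleton] at this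
      exact ih (fun c hc => hgood c (List.mem_cons_of_mem _ hc)) _ u hlen this
    · -- j ≤ P.length : the window lies inside P ++ [b] ++ P
      have hjle : j ≤ P.length := by omega
      have hpre : P ++ [b] ++ P <+: (P ++ [b]) ++ blockConcat P bs := by
        refine ⟨(bs.map (fun c => c :: P)).flatten, ?_⟩
        simp [blockConcat]
      have hw' : Window u j (P ++ [b] ++ P) := by
        refine hw.of_prefix hpre ?_
        simp only [List.length_append, List.length_singleton]
        omega
      exact ⟨b, hgood b (List.mem_cons_self), hw'.infix⟩

end Aux

/-- Every word `u` of the language with `|u| ≤ |p^(k)| + 1` is a subword of `p^(k) a p^(k)`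
for some letter `a ∈ A_{k+1} = {a_j : j ≥ k+1}`. -/
theorem language_subword_of_block {A : Type*} [Fintype A] (a : ℕ → A) (n : ℕ → ℕ)
    (hn : ∀ k, 2 ≤ n k) (ha : ∀ k, a (k + 1) ≠ a k) (k : ℕ) (u : List A)
    (hu : occursIn1 u (pInf a n)) (hlen : u.length ≤ (pBlock a n (k + 1)).length + 1) :
    ∃ b : A, (∃ j, k + 1 ≤ j ∧ a j = b) ∧
      u <:+: (pBlock a n (k + 1) ++ [b] ++ pBlock a n (k + 1)) := by
  obtain ⟨j, hj⟩ := hu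
  set m := k + 1 + j + u.length with hm
  have hmk : k + 1 ≤ m := by omega
  have hL : j + u.length ≤ (pBlock a n m).length := by
    have := le_length_pBlock a n hn m; omega
  have hw : Window u j (pBlock a n m) := by
    refine ⟨hL, fun i hi hji => ?_⟩
    have := hj ⟨i, hi⟩
    simp only [List.get_eq_getElem] at this
    rw [this, pInf_eq a n hn hji]
  obtain ⟨bs, hbs, heq⟩ := pBlock_good a n hn k hmk
  rw [heq] at hw
  exact main_aux a k (pBlock a n (k + 1)) bs hbs j u hlen hw
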